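/- For positive integers m, k and a, as a → ∞ one has (1/a)·ln( m^{(k+1)a} · ((ka)!/(ka+1)) · ((ka+1)/k!)^a / (a!·(ka+1)!) ) → (k+1)·ln(m) + 1 − ln((k−1)!). -/

import Mathlib

open Real Filter

lemma log_div_self_real : Tendsto (fun x : ℝ => Real.log x / x) atTop (nhds 0) := by
  simpa using Real.tendsto_pow_log_div_mul_add_atTop 1 0 1 one_ne_zero

lemma log_div_self_nat : Tendsto (fun n : ℕ => Real.log n / n) atTop (nhds 0) :=
  log_div_self_real.comp tendsto_natCast_atTop_atTop

lemma stirling_log : Tendsto (fun n : ℕ => Real.log n - Real.log n.factorial / n) atTop (nhds 1) := by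
  have hπ : (0:ℝ) < √π := Real.sqrt_pos.mpr Real.pi_pos
  have h1 : Tendsto (fun n : ℕ => Real.log (Stirling.stirlingSeq n) * (1 / n)) atTop (nhds 0) := by
    have hl := ((Real.continuousAt_log hπ.ne').tendsto).comp Stirling.tendsto_stirlingSeq_sqrt_pi
    simpa using hl.mul tendsto_one_div_atTop_nhds_zero_nat
  have h2 : Tendsto (fun n : ℕ => Real.log (2 * n) / (2 * n)) atTop (nhds 0) := by
    apply log_div_self_real.comp
    exact (tendsto_natCast_atTop_atTop (R := ℝ)).const_mul_atTop two_pos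
  have key : Tendsto (fun n : ℕ => 1 - Real.log (Stirling.stirlingSeq n) * (1 / n)
      - Real.log (2 * n) / (2 * n)) atTop (nhds 1) := by
    have := (tendsto_const_nhds (x := (1:ℝ)) (f := atTop (α := ℕ))).sub h1 |>.sub h2
    simpa using this
  apply key.congr'
  filter_upwards [eventually_ge_atTop 1] with n hn
  have hn' : (0:ℝ) < n := by exact_mod_cast hn
  have hf := Stirling.log_stirlingSeq_formula n
  have hlog : Real.log ((n:ℝ) / Real.exp 1) = Real.log n - 1 := by
    rw [Real.log_div hn'.ne' (Real.exp_ne_zero 1), Real.log_exp]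
  rw [hlog] at hf
  have : Real.log n.factorial = Real.log (Stirling.stirlingSeq n) + 1 / 2 * Real.log (2 * n)
      + n * (Real.log n - 1) := by linarith
  rw [this]
  field_simp
  ring

open Real Filter in
theorem stmt8 (m k : ℕ) (hm : 0 < m) (hk : 0 < k) :
    Tendsto (fun a : ℕ =>
      (1 / (a : ℝ)) * Real.log
        ((m : ℝ) ^ ((k + 1) * a) * (((k * a).factorial : ℝ) / (k * a + 1)) *
          (((k * a + 1 : ℕ) : ℝ) / (k.factorial : ℝ)) ^ a /
            ((a.factorial : ℝ) * ((k * a + 1).factorial : ℝ))))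
      atTop
      (nhds ((k + 1) * Real.log m + 1 - Real.log ((k - 1).factorial))) := by
  -- T2 : log(ka+1) - log a → log k
  have hT2 : Tendsto (fun a : ℕ => Real.log ((k:ℝ) * a + 1) - Real.log a) atTop
      (nhds (Real.log k)) := by
    have hlim : Tendsto (fun a : ℕ => (k:ℝ) + 1 / a) atTop (nhds k) := by
      simpa using (tendsto_const_nhds (x := (k:ℝ)) (f := atTop (α := ℕ))).add
        tendsto_one_div_atTop_nhds_zero_nat
    have hcont := (Real.continuousAt_log (by exact_mod_cast hk.ne' : (k:ℝ) ≠ 0)).tendsto.comp hlim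
    apply hcont.congr'
    filter_upwards [eventually_ge_atTop 1] with a ha
    have ha' : (0:ℝ) < a := by exact_mod_cast ha
    have h1 : (0:ℝ) < (k:ℝ) * a + 1 := by positivity
    show Real.log ((k:ℝ) + 1 / a) = _
    rw [show (k:ℝ) + 1 / a = ((k:ℝ) * a + 1) / a by field_simp, Real.log_div h1.ne' ha'.ne']
  -- T4 : 2 * log(ka+1) / a → 0
  have hT4 : Tendsto (fun a : ℕ => 2 * Real.log ((k:ℝ) * a + 1) / a) atTop (nhds 0) := by
    have h1 : Tendsto (fun a : ℕ => (Real.log ((k:ℝ) * a + 1) - Real.log a) * (1 / a)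
        + Real.log a / a) atTop (nhds 0) := by
      have := (hT2.mul tendsto_one_div_atTop_nhds_zero_nat).add log_div_self_nat
      simpa using this
    have := h1.const_mul (2:ℝ)
    rw [mul_zero] at this
    apply this.congr'
    filter_upwards [eventually_ge_atTop 1] with a ha
    have ha' : ((a:ℝ)) ≠ 0 := by positivity
    field_simp
    ring
  -- combine
  have hsum : Tendsto (fun a : ℕ => ((k:ℝ) + 1) * Real.log m
      + (Real.log ((k:ℝ) * a + 1) - Real.log a)
      + (Real.log a - Real.log a.factorial / a)
      - Real.log k.factorial
      - 2 * Real.log ((k:ℝ) * a + 1) / a) atTop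
      (nhds (((k:ℝ) + 1) * Real.log m + Real.log k + 1 - Real.log k.factorial - 0)) := by
    exact (((tendsto_const_nhds.add hT2).add stirling_log).sub tendsto_const_nhds).sub hT4
  have hfac : Real.log (k.factorial : ℝ) = Real.log k + Real.log ((k-1).factorial : ℝ) := by
    have h1 : k.factorial = k * (k-1).factorial := (Nat.mul_factorial_pred hk.ne').symm
    rw [h1]
    push_cast
    rw [Real.log_mul (by exact_mod_cast hk.ne') (by positivity)]
  have hlim : Tendsto (fun a : ℕ => ((k:ℝ) + 1) * Real.log m
      + (Real.log ((k:ℝ) * a + 1) - Real.log a)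
      + (Real.log a - Real.log a.factorial / a)
      - Real.log k.factorial
      - 2 * Real.log ((k:ℝ) * a + 1) / a) atTop
      (nhds ((k + 1) * Real.log m + 1 - Real.log ((k - 1).factorial))) := by
    convert hsum using 2
    rw [hfac]; ring
  apply hlim.congr'
  filter_upwards [eventually_ge_atTop 1] with a ha
  have ha' : (0:ℝ) < a := by exact_mod_cast ha
  have hc : (0:ℝ) < (k:ℝ) * a + 1 := by positivity
  have hkf : (0:ℝ) < (k.factorial : ℝ) := by exact_mod_cast k.factorial_pos
  have haf : (0:ℝ) < (a.factorial : ℝ) := by exact_mod_cast a.factorial_pos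
  have hkaf : (0:ℝ) < ((k * a).factorial : ℝ) := by exact_mod_cast (k*a).factorial_pos
  have hm' : (0:ℝ) < (m:ℝ) := by exact_mod_cast hm
  have hcast : ((k * a + 1 : ℕ) : ℝ) = (k:ℝ) * a + 1 := by push_cast; ring
  have hfs : ((k * a + 1).factorial : ℝ) = ((k:ℝ) * a + 1) * ((k * a).factorial : ℝ) := by
    rw [Nat.factorial_succ]; push_cast; ring
  show _ = (1 / (a:ℝ)) * Real.log _
  rw [hcast, hfs]
  rw [Real.log_div (by positivity) (by positivity), Real.log_mul (by positivity) (by positivity),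
    Real.log_mul (by positivity) (by positivity), Real.log_pow, Real.log_div hkaf.ne' hc.ne',
    Real.log_pow, Real.log_div hc.ne' hkf.ne', Real.log_mul haf.ne' (by positivity),
    Real.log_mul hc.ne' hkaf.ne']
  push_cast
  field_simp
  ring
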